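/- Bridging-domain adaptation bound (population version): Let h_1 minimize ε_S over H, h_T* minimize ε_T over H, h_B* minimize ε_B over H, γ_1 = min_h {ε_T(h) + (1/2)ε_S(h) + (1/2)ε_B(h)}, γ_2 = min_h {ε_B(h) + ε_S(h)}, and D_α = (1/2)D_S + (1/2)D_B. Then ε_T(h_1) ≤ ε_T(h_T*) + (1/2)ε_B(h_B*) + 2γ_1 + γ_2 + d_{H∆H}(D_α, D_T) + (1/2) d_{H∆H}(D_S, D_B). -/

import Mathlib

open MeasureTheory

/-- Probability that two hypotheses disagree under `D`. -/
noncomputable def errP {X : Type*} [MeasurableSpace X] (D : Measure X)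
    (h h' : X → Bool) : ℝ :=
  (D {x | h x ≠ h' x}).toReal

/-- Error of hypothesis `h` against labeling function `f` under `D`. -/
noncomputable def errL {X : Type*} [MeasurableSpace X] (D : Measure X)
    (f h : X → Bool) : ℝ :=
  (D {x | h x ≠ f x}).toReal

/-- The `H∆H`-divergence between two measures. -/
noncomputable def dHH {X : Type*} [MeasurableSpace X] (H : Set (X → Bool))
    (D₁ D₂ : Measure X) : ℝ :=
  2 * sSup ((fun p : (X → Bool) × (X → Bool) =>
      |errP D₁ p.1 p.2 - errP D₂ p.1 p.2|) '' (H ×ˢ H))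

section Aux

variable {X : Type*} [MeasurableSpace X]

lemma errP_nonneg (D : Measure X) (h h' : X → Bool) : 0 ≤ errP D h h' :=
  ENNReal.toReal_nonneg

lemma errL_nonneg (D : Measure X) (f h : X → Bool) : 0 ≤ errL D f h :=
  ENNReal.toReal_nonneg

lemma errP_le_one (D : Measure X) [IsProbabilityMeasure D] (h h' : X → Bool) :
    errP D h h' ≤ 1 := by
  have := ENNReal.toReal_mono (ENNReal.one_ne_top) (prob_le_one (μ := D) (s := {x | h x ≠ h' x}))
  simpa [errP] using this

lemma sub_add_split (D : Measure X) [IsFiniteMeasure D] (A B C : Set X) (hsub : A ⊆ B ∪ C) :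
    (D A).toReal ≤ (D B).toReal + (D C).toReal := by
  have h1 : D A ≤ D B + D C := le_trans (measure_mono hsub) (measure_union_le _ _)
  have h2 := ENNReal.toReal_mono
    (ENNReal.add_ne_top.mpr ⟨measure_ne_top _ _, measure_ne_top _ _⟩) h1
  rwa [ENNReal.toReal_add (measure_ne_top _ _) (measure_ne_top _ _)] at h2

lemma errL_triangle (D : Measure X) [IsFiniteMeasure D] (f h h' : X → Bool) :
    errL D f h ≤ errL D f h' + errP D h h' := by
  refine sub_add_split D _ _ _ ?_
  intro x hx
  simp only [Set.mem_union, Set.mem_setOf_eq] at *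
  by_cases hh : h x = h' x
  · left; rw [← hh]; exact hx
  · right; exact hh

lemma errP_le_errL_add (D : Measure X) [IsFiniteMeasure D] (f h h' : X → Bool) :
    errP D h h' ≤ errL D f h + errL D f h' := by
  refine sub_add_split D _ _ _ ?_
  intro x hx
  simp only [Set.mem_union, Set.mem_setOf_eq] at *
  by_cases hh : h x = f x
  · right; exact fun e => hx (hh.trans e.symm)
  · left; exact hh

lemma errP_alpha (D₁ D₂ : Measure X) [IsProbabilityMeasure D₁] [IsProbabilityMeasure D₂]
    (h h' : X → Bool) :
    errP ((1/2 : ENNReal) • D₁ + (1/2 : ENNReal) • D₂) h h'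
      = (1/2) * errP D₁ h h' + (1/2) * errP D₂ h h' := by
  unfold errP
  rw [Measure.add_apply, Measure.smul_apply, Measure.smul_apply, smul_eq_mul, smul_eq_mul,
    ENNReal.toReal_add, ENNReal.toReal_mul, ENNReal.toReal_mul]
  · norm_num
  · exact ENNReal.mul_ne_top (by norm_num) (measure_ne_top _ _)
  · exact ENNReal.mul_ne_top (by norm_num) (measure_ne_top _ _)

lemma dHH_bddAbove (H : Set (X → Bool)) (D₁ D₂ : Measure X)
    [IsProbabilityMeasure D₁] [IsProbabilityMeasure D₂] :
    BddAbove ((fun p : (X → Bool) × (X → Bool) =>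
      |errP D₁ p.1 p.2 - errP D₂ p.1 p.2|) '' (H ×ˢ H)) := by
  refine ⟨1, ?_⟩
  rintro r ⟨p, _, rfl⟩
  have h1 := errP_le_one D₁ p.1 p.2
  have h2 := errP_le_one D₂ p.1 p.2
  have h3 := errP_nonneg D₁ p.1 p.2
  have h4 := errP_nonneg D₂ p.1 p.2
  rw [abs_le]; constructor <;> linarith

lemma abs_errP_le_dHH (H : Set (X → Bool)) (D₁ D₂ : Measure X)
    [IsProbabilityMeasure D₁] [IsProbabilityMeasure D₂]
    {g g' : X → Bool} (hg : g ∈ H) (hg' : g' ∈ H) :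
    |errP D₁ g g' - errP D₂ g g'| ≤ (1/2) * dHH H D₁ D₂ := by
  have hmem : |errP D₁ g g' - errP D₂ g g'| ∈
      ((fun p : (X → Bool) × (X → Bool) =>
        |errP D₁ p.1 p.2 - errP D₂ p.1 p.2|) '' (H ×ˢ H)) :=
    ⟨(g, g'), Set.mk_mem_prod hg hg', rfl⟩
  have := le_csSup (dHH_bddAbove H D₁ D₂) hmem
  unfold dHH; linarith

lemma dHH_nonneg (H : Set (X → Bool)) (D₁ D₂ : Measure X)
    [IsProbabilityMeasure D₁] [IsProbabilityMeasure D₂]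
    {g : X → Bool} (hg : g ∈ H) : 0 ≤ dHH H D₁ D₂ := by
  have h := abs_errP_le_dHH H D₁ D₂ hg hg
  have := abs_nonneg (errP D₁ g g - errP D₂ g g)
  linarith

end Aux

theorem bridging_adaptation_bound {X : Type*} [MeasurableSpace X]
    (D_S D_B D_T : Measure X)
    [IsProbabilityMeasure D_S] [IsProbabilityMeasure D_B] [IsProbabilityMeasure D_T]
    (f_S f_B f_T : X → Bool)
    (mfS : Measurable f_S) (mfB : Measurable f_B) (mfT : Measurable f_T)
    (H : Set (X → Bool)) (hmeas : ∀ g ∈ H, Measurable g)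
    (h₁ hT hB : X → Bool) (hh₁ : h₁ ∈ H) (hhT : hT ∈ H) (hhB : hB ∈ H)
    (h₁min : ∀ h ∈ H, errL D_S f_S h₁ ≤ errL D_S f_S h)
    (hTmin : ∀ h ∈ H, errL D_T f_T hT ≤ errL D_T f_T h)
    (hBmin : ∀ h ∈ H, errL D_B f_B hB ≤ errL D_B f_B h)
    (γ₁ γ₂ : ℝ)
    (hγ₁ : IsLeast ((fun h => errL D_T f_T h + (1/2) * errL D_S f_S h
        + (1/2) * errL D_B f_B h) '' H) γ₁)
    (hγ₂ : IsLeast ((fun h => errL D_B f_B h + errL D_S f_S h) '' H) γ₂) :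
    errL D_T f_T h₁ ≤ errL D_T f_T hT + (1/2) * errL D_B f_B hB
      + 2 * γ₁ + γ₂
      + dHH H ((1/2 : ENNReal) • D_S + (1/2 : ENNReal) • D_B) D_T
      + (1/2) * dHH H D_S D_B := by
  set Dα : Measure X := (1/2 : ENNReal) • D_S + (1/2 : ENNReal) • D_B with hDα
  haveI : IsProbabilityMeasure Dα := by
    constructor
    simp [hDα, Measure.add_apply, measure_univ]
    exact ENNReal.inv_two_add_inv_two
  -- extract the minimizers h₂ and h₃
  obtain ⟨h₂, hh₂, hval₂⟩ := hγ₁.1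
  obtain ⟨h₃, hh₃, hval₃⟩ := hγ₂.1
  simp only at hval₂ hval₃
  -- abbreviations
  -- step 1: triangle through h₂ and bridge α ↔ T
  have s1 : errL D_T f_T h₁ ≤ errL D_T f_T h₂ + errP D_T h₁ h₂ := errL_triangle _ _ _ _
  have s2 : errP D_T h₁ h₂ ≤ errP Dα h₁ h₂ + (1/2) * dHH H Dα D_T := by
    have := abs_errP_le_dHH H Dα D_T hh₁ hh₂
    rw [abs_le] at this
    linarith [this.1]
  have s3 : errP Dα h₁ h₂ = (1/2) * errP D_S h₁ h₂ + (1/2) * errP D_B h₁ h₂ :=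
    errP_alpha _ _ _ _
  have s4 : errP D_S h₁ h₂ ≤ errL D_S f_S h₁ + errL D_S f_S h₂ := errP_le_errL_add _ _ _ _
  have s5 : errP D_B h₁ h₂ ≤ errL D_B f_B h₁ + errL D_B f_B h₂ := errP_le_errL_add _ _ _ _
  -- step 2: bound ε_B(h₁) via h₃ and bridge S ↔ B
  have s6 : errL D_B f_B h₁ ≤ errL D_B f_B h₃ + errP D_B h₁ h₃ := errL_triangle _ _ _ _
  have s7 : errP D_B h₁ h₃ ≤ errP D_S h₁ h₃ + (1/2) * dHH H D_S D_B := by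
    have := abs_errP_le_dHH H D_S D_B hh₁ hh₃
    rw [abs_le] at this
    linarith [this.1]
  have s8 : errP D_S h₁ h₃ ≤ errL D_S f_S h₁ + errL D_S f_S h₃ := errP_le_errL_add _ _ _ _
  -- step 3: minimality of h₁ on source
  have s9 : errL D_S f_S h₁ ≤ errL D_S f_S h₃ := h₁min h₃ hh₃
  -- step 4: γ₂ ≤ ε_B(h₂) + ε_S(h₂)
  have s10 : γ₂ ≤ errL D_B f_B h₂ + errL D_S f_S h₂ := hγ₂.2 ⟨h₂, hh₂, rfl⟩
  -- auxiliary nonnegativity facts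
  have n1 : 0 ≤ errL D_T f_T hT := errL_nonneg _ _ _
  have n2 : 0 ≤ errL D_B f_B hB := errL_nonneg _ _ _
  have n3 : 0 ≤ errL D_T f_T h₂ := errL_nonneg _ _ _
  have n4 : 0 ≤ dHH H Dα D_T := dHH_nonneg H Dα D_T hh₁
  have n5 : 0 ≤ dHH H D_S D_B := dHH_nonneg H D_S D_B hh₁
  have n6 : errL D_B f_B hB ≤ errL D_B f_B h₃ := hBmin h₃ hh₃
  linarith
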